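/- arXiv:1001.0347 — 3 statements merged into one kernel-verified Lean document; each statement's English description precedes it below -/
import Mathlib

section
/- Let R be a reduced root system, > a choice of positive roots, and A a set of pairwise strongly orthogonal roots satisfying property #: for all distinct α₁, α₂ ∈ A and all β > 0, s_{α₁}(β) < 0 implies s_{α₂}(β) > 0. Then for all distinct α₁, α₂ ∈ A and β > 0 with s_{α₁}(β) < 0, one also has s_{α₁}s_{α₂}(β) < 0. -/
open scoped InnerProductSpace

variable {V : Type*} [NormedAddCommGroup V] [InnerProductSpace ℝ V]

/-- The (orthogonal) reflection in the root `α`: `s_α(v) = v - (2⟪v,α⟫/⟪α,α⟫)α`. -/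
noncomputable def sRefl (α v : V) : V := v - (2 * ⟪v, α⟫_ℝ / ⟪α, α⟫_ℝ) • α

/-- The coroot of `α`, identified with a vector via the invariant inner product. -/
noncomputable def coroot (α : V) : V := (2 / ⟪α, α⟫_ℝ) • α

/-- `S_A`: the product of the (commuting) reflections in the pairwise orthogonal
elements of `A`, given by its closed formula. -/
noncomputable def SRefl (A : Finset V) (v : V) : V :=
  v - ∑ α ∈ A, (2 * ⟪v, α⟫_ℝ / ⟪α, α⟫_ℝ) • α

/-- A (reduced) root system in `V`, with the ambient inner product Weyl-invariant. -/
structure IsRootSystem (R : Set V) : Prop where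
  finite : R.Finite
  nonempty : R.Nonempty
  ne_zero : ∀ α ∈ R, α ≠ (0 : V)
  refl_mem : ∀ α ∈ R, ∀ β ∈ R, sRefl α β ∈ R
  integral : ∀ α ∈ R, ∀ β ∈ R, ∃ n : ℤ, 2 * ⟪β, α⟫_ℝ / ⟪α, α⟫_ℝ = (n : ℝ)
  reduced : ∀ α ∈ R, ∀ t : ℝ, t • α ∈ R → t = 1 ∨ t = -1

/-- `α` and `β` are strongly orthogonal: neither their sum nor difference is a root. -/
def StronglyOrthogonal (R : Set V) (α β : V) : Prop := α + β ∉ R ∧ α - β ∉ R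

/-- A strongly orthogonal subset of `R`. -/
def IsSOS (R A : Set V) : Prop := A ⊆ R ∧ A.Pairwise (StronglyOrthogonal R)

/-- A choice of positive roots in `R`. -/
structure IsPositiveSystem (R P : Set V) : Prop where
  subset : P ⊆ R
  mem_or_neg_mem : ∀ α ∈ R, α ∈ P ∨ -α ∈ P
  not_both : ∀ α ∈ P, -α ∉ P
  add_mem : ∀ α ∈ P, ∀ β ∈ P, α + β ∈ R → α + β ∈ P

/-- Property `#(R,>,A)`: for distinct `α₁, α₂ ∈ A` and `β > 0`,
`s_{α₁}(β) < 0` implies `s_{α₂}(β) > 0`. -/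
def PropSharp (P A : Set V) : Prop :=
  ∀ α₁ ∈ A, ∀ α₂ ∈ A, α₁ ≠ α₂ → ∀ β ∈ P, -(sRefl α₁ β) ∈ P → sRefl α₂ β ∈ P

/-- Property `##(R,>,A)`: for disjoint `A₁, A₂ ⊆ A` and `β > 0` with `S_{A₁}(β) < 0`
one has `S_{A₂}(β) > 0` and `S_{A₁}S_{A₂}(β) < 0`. -/
def PropSharpSharp (P : Set V) (A : Finset V) : Prop :=
  ∀ A₁ ⊆ A, ∀ A₂ ⊆ A, Disjoint A₁ A₂ → ∀ β ∈ P, -(SRefl A₁ β) ∈ P →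
    SRefl A₂ β ∈ P ∧ -(SRefl A₁ (SRefl A₂ β)) ∈ P

/-- `R⁺_B = {β : β > 0 ∧ S_B(β) < 0}`. -/
noncomputable def RPlus (P : Set V) (B : Finset V) : Set V :=
  {β | β ∈ P ∧ -(SRefl B β) ∈ P}

lemma inner_self_pos' {x : V} (hx : x ≠ 0) : (0:ℝ) < ⟪x, x⟫_ℝ :=
  lt_of_not_ge (fun h => hx (real_inner_self_nonpos.mp h))

lemma sRefl_neg_arg (α v : V) : sRefl α (-v) = -sRefl α v := by
  simp only [sRefl, inner_neg_left]
  module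

lemma sRefl_sRefl_self (α : V) (hα : α ≠ 0) (v : V) : sRefl α (sRefl α v) = v := by
  have ha : ⟪α, α⟫_ℝ ≠ 0 := ne_of_gt (inner_self_pos' hα)
  simp only [sRefl, inner_sub_left, real_inner_smul_left]
  rw [sub_sub, ← add_smul]
  have : 2 * ⟪v, α⟫_ℝ / ⟪α, α⟫_ℝ +
      2 * (⟪v, α⟫_ℝ - 2 * ⟪v, α⟫_ℝ / ⟪α, α⟫_ℝ * ⟪α, α⟫_ℝ) / ⟪α, α⟫_ℝ = 0 := by
    field_simp; ring
  rw [this, zero_smul, sub_zero]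

lemma sRefl_comm (α₁ α₂ : V) (h : ⟪α₁, α₂⟫_ℝ = 0) (v : V) :
    sRefl α₁ (sRefl α₂ v) = sRefl α₂ (sRefl α₁ v) := by
  have h' : ⟪α₂, α₁⟫_ℝ = 0 := by rwa [real_inner_comm]
  simp only [sRefl, inner_sub_left, real_inner_smul_left, h, h', mul_zero, sub_zero]
  module

lemma neg_mem_of_mem (R : Set V) (hR : IsRootSystem R) {α : V} (hα : α ∈ R) : -α ∈ R := by
  have ha : ⟪α, α⟫_ℝ ≠ 0 := ne_of_gt (inner_self_pos' (hR.ne_zero α hα))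
  have := hR.refl_mem α hα α hα
  have e : sRefl α α = -α := by
    simp only [sRefl]
    rw [mul_div_assoc, div_self ha, mul_one, two_smul]
    module
  rwa [e] at this

/-- Strongly orthogonal roots that are not proportional are orthogonal. -/
lemma strongly_orthogonal_inner_eq_zero (R : Set V) (hR : IsRootSystem R)
    {α β : V} (hα : α ∈ R) (hβ : β ∈ R) (hne : β ≠ α) (hne' : β ≠ -α)
    (hso : α + β ∉ R ∧ α - β ∉ R) : ⟪α, β⟫_ℝ = 0 := by
  by_contra hc
  have haz : α ≠ 0 := hR.ne_zero α hα
  have hbz : β ≠ 0 := hR.ne_zero β hβ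
  have ha : (0:ℝ) < ⟪α, α⟫_ℝ := inner_self_pos' haz
  have hb : (0:ℝ) < ⟪β, β⟫_ℝ := inner_self_pos' hbz
  obtain ⟨n, hn⟩ := hR.integral α hα β hβ
  obtain ⟨m, hm⟩ := hR.integral β hβ α hα
  -- n = 2⟪β,α⟫/⟪α,α⟫, m = 2⟪α,β⟫/⟪β,β⟫
  have hnm : (n:ℝ) * (m:ℝ) = 4 * ⟪α, β⟫_ℝ ^ 2 / (⟪α, α⟫_ℝ * ⟪β, β⟫_ℝ) := by
    rw [← hn, ← hm, real_inner_comm β α]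
    field_simp; ring
  have hCS : ⟪α, β⟫_ℝ * ⟪α, β⟫_ℝ ≤ ⟪α, α⟫_ℝ * ⟪β, β⟫_ℝ := real_inner_mul_inner_self_le α β
  have hnm_pos : (0:ℝ) < (n:ℝ) * (m:ℝ) := by
    rw [hnm]
    positivity
  have hnm_le : (n:ℝ) * (m:ℝ) ≤ 4 := by
    rw [hnm, div_le_iff₀ (by positivity)]
    nlinarith
  have hnmZ_pos : 0 < n * m := by exact_mod_cast (by push_cast; exact hnm_pos : (0:ℝ) < ((n*m:ℤ):ℝ))
  have hnmZ_le : n * m ≤ 4 := by exact_mod_cast (by push_cast; exact hnm_le : ((n*m:ℤ):ℝ) ≤ 4)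
  -- Case n*m = 4 : Cauchy-Schwarz equality, so β is proportional to α.
  by_cases h4 : n * m = 4
  · have heq : ⟪α, β⟫_ℝ * ⟪α, β⟫_ℝ = ⟪α, α⟫_ℝ * ⟪β, β⟫_ℝ := by
      have : (n:ℝ) * (m:ℝ) = 4 := by exact_mod_cast congrArg (Int.cast : ℤ → ℝ) h4
      rw [this] at hnm
      field_simp at hnm
      nlinarith [hnm]
    have heq' : ⟪α, β⟫_ℝ * ⟪α, β⟫_ℝ = (‖α‖ * ‖β‖) * (‖α‖ * ‖β‖) := by
      rw [heq, real_inner_self_eq_norm_mul_norm, real_inner_self_eq_norm_mul_norm]; ring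
    have hfac : (⟪α, β⟫_ℝ - ‖α‖ * ‖β‖) * (⟪α, β⟫_ℝ + ‖α‖ * ‖β‖) = 0 := by nlinarith [heq']
    have haznorm : ‖α‖ ≠ 0 := norm_ne_zero_iff.2 haz
    rcases mul_eq_zero.1 hfac with he | he
    · -- ⟪α,β⟫ = ‖α‖‖β‖ : then ‖β‖ • α = ‖α‖ • β
      have he' : ⟪α, β⟫_ℝ = ‖α‖ * ‖β‖ := by linarith
      have hsm : ‖β‖ • α = ‖α‖ • β := (inner_eq_norm_mul_iff_real).1 he'
      have ht : (‖β‖ / ‖α‖) • α = β := by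
        rw [div_eq_mul_inv, mul_comm, mul_smul, hsm, smul_smul,
          inv_mul_cancel₀ haznorm, one_smul]
      rcases hR.reduced α hα (‖β‖ / ‖α‖) (by rw [ht]; exact hβ) with h1 | h1
      · exact hne (by rw [← ht, h1, one_smul])
      · exact absurd (div_nonneg (norm_nonneg β) (norm_nonneg α)) (by rw [h1]; norm_num)
    · -- ⟪α,β⟫ = -‖α‖‖β‖ : apply to -β
      have hnorm' : ⟪α, -β⟫_ℝ = ‖α‖ * ‖-β‖ := by
        rw [inner_neg_right, norm_neg]; linarith
      have hsm : ‖-β‖ • α = ‖α‖ • (-β) := (inner_eq_norm_mul_iff_real).1 hnorm'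
      rw [norm_neg] at hsm
      have ht : (‖β‖ / ‖α‖) • α = -β := by
        rw [div_eq_mul_inv, mul_comm, mul_smul, hsm, smul_smul,
          inv_mul_cancel₀ haznorm, one_smul]
      rcases hR.reduced α hα (‖β‖ / ‖α‖) (by rw [ht]; exact neg_mem_of_mem R hR hβ)
        with h1 | h1
      · have hab : α = -β := by rw [← ht, h1, one_smul]
        exact hne' (by rw [hab, neg_neg])
      · exact absurd (div_nonneg (norm_nonneg β) (norm_nonneg α)) (by rw [h1]; norm_num)
  · -- n*m ∈ {1,2,3}, so |n| = 1 or |m| = 1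
    have h1 : n = 1 ∨ n = -1 ∨ m = 1 ∨ m = -1 := by
      by_contra hcon
      push_neg at hcon
      obtain ⟨e1, e2, e3, e4⟩ := hcon
      have hn0 : n ≠ 0 := by rintro rfl; simp at hnmZ_pos
      have hm0 : m ≠ 0 := by rintro rfl; simp at hnmZ_pos
      have hn2 : 2 ≤ n.natAbs := by omega
      have hm2 : 2 ≤ m.natAbs := by omega
      have : 4 ≤ (n * m).natAbs := by
        rw [Int.natAbs_mul]; exact Nat.mul_le_mul hn2 hm2
      omega
    rcases h1 with h1 | h1 | h1 | h1
    · -- n = 1 : sRefl α β = β - α ∈ R, so α - β ∈ R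
      have : sRefl α β = β - α := by
        simp only [sRefl]
        rw [hn, h1]; push_cast; rw [one_smul]
      have hmem := hR.refl_mem α hα β hβ
      rw [this] at hmem
      have := neg_mem_of_mem R hR hmem
      rw [neg_sub] at this
      exact hso.2 this
    · -- n = -1 : sRefl α β = β + α ∈ R
      have : sRefl α β = β + α := by
        simp only [sRefl]
        rw [hn, h1]; push_cast; module
      have hmem := hR.refl_mem α hα β hβ
      rw [this, add_comm] at hmem
      exact hso.1 hmem
    · -- m = 1 : sRefl β α = α - β ∈ R
      have : sRefl β α = α - β := by
        simp only [sRefl]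
        rw [hm, h1]; push_cast; rw [one_smul]
      have hmem := hR.refl_mem β hβ α hα
      rw [this] at hmem
      exact hso.2 hmem
    · -- m = -1 : sRefl β α = α + β ∈ R
      have : sRefl β α = α + β := by
        simp only [sRefl]
        rw [hm, h1]; push_cast; module
      have hmem := hR.refl_mem β hβ α hα
      rw [this] at hmem
      exact hso.1 hmem

/-- Under property `#`, for distinct `α₁, α₂ ∈ A` and `β > 0` with `s_{α₁}(β) < 0`,
one also has `s_{α₁}s_{α₂}(β) < 0`. -/
theorem statement4 (R P A : Set V) (hR : IsRootSystem R)
    (hP : IsPositiveSystem R P) (hA : IsSOS R A) (hsharp : PropSharp P A) :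
    ∀ α₁ ∈ A, ∀ α₂ ∈ A, α₁ ≠ α₂ → ∀ β ∈ P, -(sRefl α₁ β) ∈ P →
      -(sRefl α₁ (sRefl α₂ β)) ∈ P := by
  intro α₁ hα₁ α₂ hα₂ hne β hβ hneg
  have hα₁R : α₁ ∈ R := hA.1 hα₁
  have hα₂R : α₂ ∈ R := hA.1 hα₂
  have hα₁z : α₁ ≠ 0 := hR.ne_zero α₁ hα₁R
  -- dispose of the degenerate case α₂ = -α₁
  by_cases hdeg : α₂ = -α₁
  · exfalso
    have hsame : sRefl α₂ β = sRefl α₁ β := by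
      subst hdeg
      simp only [sRefl, inner_neg_left, inner_neg_right, neg_neg]
      module
    have h1 : sRefl α₂ β ∈ P := hsharp α₁ hα₁ α₂ hα₂ hne β hβ hneg
    rw [hsame] at h1
    exact hP.not_both _ h1 hneg
  -- orthogonality
  have horth : ⟪α₁, α₂⟫_ℝ = 0 := by
    have hso := hA.2 hα₁ hα₂ hne
    exact strongly_orthogonal_inner_eq_zero R hR hα₁R hα₂R (fun h => hne h.symm) hdeg hso
  -- apply # to β' = -s₁β
  have key := hsharp α₁ hα₁ α₂ hα₂ hne (-(sRefl α₁ β)) hneg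
  rw [sRefl_neg_arg, sRefl_sRefl_self α₁ hα₁z, neg_neg, sRefl_neg_arg] at key
  have := key hβ
  rwa [sRefl_comm α₂ α₁ (by rwa [real_inner_comm])] at this
end

section
/- Let R be a reduced root system with positive system >, and A a set of pairwise strongly orthogonal roots satisfying property ## (for disjoint A₁,A₂ ⊂ A and β>0 with S_{A₁}(β)<0 one has S_{A₂}(β)>0 and S_{A₁}S_{A₂}(β)<0). For B ⊂ A define R⁺_B = {β ∈ R : β > 0 and S_B(β) < 0}. Then for disjoint A', A'' ⊂ A the sets R⁺_{A'} and R⁺_{A''} are disjoint and R⁺_{A'∪A''} = R⁺_{A'} ∪ R⁺_{A''}. -/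
open scoped InnerProductSpace

variable {V : Type*} [NormedAddCommGroup V] [InnerProductSpace ℝ V]

section Aux

lemma SRefl_singleton (α v : V) : SRefl {α} v = sRefl α v := by
  simp [SRefl, sRefl]

lemma inner_SRefl (B : Finset V) (v α : V) :
    ⟪SRefl B v, α⟫_ℝ = ⟪v, α⟫_ℝ - ∑ γ ∈ B, (2 * ⟪v, γ⟫_ℝ / ⟪γ, γ⟫_ℝ) * ⟪γ, α⟫_ℝ := by
  simp [SRefl, inner_sub_left, sum_inner, real_inner_smul_left]

lemma inner_SRefl_of_orth {B : Finset V} {α : V} (h : ∀ γ ∈ B, ⟪γ, α⟫_ℝ = 0) (v : V) :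
    ⟪SRefl B v, α⟫_ℝ = ⟪v, α⟫_ℝ := by
  rw [inner_SRefl, Finset.sum_eq_zero, sub_zero]
  intro γ hγ
  rw [h γ hγ, mul_zero]

lemma inner_SRefl_self_mem [DecidableEq V] {B : Finset V} {α : V} (hα : α ∈ B)
    (hαα : ⟪α, α⟫_ℝ ≠ 0) (h : ∀ γ ∈ B, γ ≠ α → ⟪γ, α⟫_ℝ = 0) (v : V) :
    ⟪SRefl B v, α⟫_ℝ = -⟪v, α⟫_ℝ := by
  rw [inner_SRefl, Finset.sum_eq_single α (fun γ hγ hne => by rw [h γ hγ hne, mul_zero])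
    (fun hc => absurd hα hc)]
  field_simp
  ring

lemma SRefl_union [DecidableEq V] {B₁ B₂ : Finset V} (hdisj : Disjoint B₁ B₂)
    (horth : ∀ α ∈ B₁, ∀ γ ∈ B₂, ⟪γ, α⟫_ℝ = 0) (v : V) :
    SRefl (B₁ ∪ B₂) v = SRefl B₁ (SRefl B₂ v) := by
  have h1 : ∀ α ∈ B₁, (2 * ⟪SRefl B₂ v, α⟫_ℝ / ⟪α, α⟫_ℝ) • α
      = (2 * ⟪v, α⟫_ℝ / ⟪α, α⟫_ℝ) • α := by
    intro α hα
    rw [inner_SRefl_of_orth (fun γ hγ => horth α hα γ hγ) v]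
  calc SRefl (B₁ ∪ B₂) v
      = v - (∑ α ∈ B₁, (2 * ⟪v, α⟫_ℝ / ⟪α, α⟫_ℝ) • α
          + ∑ α ∈ B₂, (2 * ⟪v, α⟫_ℝ / ⟪α, α⟫_ℝ) • α) := by
        rw [SRefl, Finset.sum_union hdisj]
    _ = (v - ∑ α ∈ B₂, (2 * ⟪v, α⟫_ℝ / ⟪α, α⟫_ℝ) • α)
          - ∑ α ∈ B₁, (2 * ⟪SRefl B₂ v, α⟫_ℝ / ⟪α, α⟫_ℝ) • α := by
        rw [Finset.sum_congr rfl h1]; abel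
    _ = SRefl B₁ (SRefl B₂ v) := by rw [SRefl, SRefl]

lemma SRefl_SRefl [DecidableEq V] {B : Finset V} (h0 : ∀ α ∈ B, ⟪α, α⟫_ℝ ≠ 0)
    (horth : ∀ α ∈ B, ∀ γ ∈ B, γ ≠ α → ⟪γ, α⟫_ℝ = 0) (v : V) :
    SRefl B (SRefl B v) = v := by
  have h1 : ∀ α ∈ B, (2 * ⟪SRefl B v, α⟫_ℝ / ⟪α, α⟫_ℝ) • α
      = -((2 * ⟪v, α⟫_ℝ / ⟪α, α⟫_ℝ) • α) := by
    intro α hα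
    rw [inner_SRefl_self_mem hα (h0 α hα) (fun γ hγ hne => horth α hα γ hγ hne) v, ← neg_smul]
    congr 1
    ring
  calc SRefl B (SRefl B v)
      = SRefl B v - ∑ α ∈ B, (2 * ⟪SRefl B v, α⟫_ℝ / ⟪α, α⟫_ℝ) • α := rfl
    _ = SRefl B v + ∑ α ∈ B, (2 * ⟪v, α⟫_ℝ / ⟪α, α⟫_ℝ) • α := by
        rw [Finset.sum_congr rfl h1, Finset.sum_neg_distrib, sub_neg_eq_add]
    _ = v := by rw [SRefl]; abel

lemma root_inner_self_ne_zero {R : Set V} (hR : IsRootSystem R) {α : V} (hα : α ∈ R) :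
    ⟪α, α⟫_ℝ ≠ 0 :=
  inner_self_ne_zero.mpr (hR.ne_zero α hα)

lemma sRefl_self {α : V} (h : ⟪α, α⟫_ℝ ≠ 0) : sRefl α α = -α := by
  rw [sRefl, mul_div_assoc, div_self h, mul_one, two_smul]; abel

lemma neg_mem_root {R : Set V} (hR : IsRootSystem R) {α : V} (hα : α ∈ R) : -α ∈ R := by
  have := hR.refl_mem α hα α hα
  rwa [sRefl_self (root_inner_self_ne_zero hR hα)] at this

lemma SRefl_mem {R : Set V} (hR : IsRootSystem R) [DecidableEq V] (B : Finset V)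
    (hBR : ↑B ⊆ R) (horth : ∀ α ∈ B, ∀ γ ∈ B, γ ≠ α → ⟪γ, α⟫_ℝ = 0) {v : V} (hv : v ∈ R) :
    SRefl B v ∈ R := by
  induction B using Finset.induction_on with
  | empty => simpa [SRefl] using hv
  | @insert a s ha ih =>
    have haR : a ∈ R := hBR (by simp)
    have hsR : ↑s ⊆ R := fun x hx => hBR (by simp at hx ⊢; exact Or.inr hx)
    have horth' : ∀ α ∈ ({a} : Finset V), ∀ γ ∈ s, ⟪γ, α⟫_ℝ = 0 := by
      intro α hα γ hγ
      have hα' : α = a := by simpa using hα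
      exact horth α (by simp [hα']) γ (Finset.mem_insert_of_mem hγ)
        (by intro h; rw [h, hα'] at hγ; exact ha hγ)
    rw [Finset.insert_eq, SRefl_union (Finset.disjoint_singleton_left.mpr ha) horth',
      SRefl_singleton]
    exact hR.refl_mem a haR _
      (ih hsR (fun α hα γ hγ hne =>
        horth α (Finset.mem_insert_of_mem hα) γ (Finset.mem_insert_of_mem hγ) hne))

lemma orth_of_SOS [DecidableEq V] {R P : Set V} {A : Finset V} (hR : IsRootSystem R)
    (hP : IsPositiveSystem R P) (hA : IsSOS R ↑A) (hsharp2 : PropSharpSharp P A) :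
    ∀ x ∈ A, ∀ y ∈ A, x ≠ y → ⟪x, y⟫_ℝ = 0 := by
  intro x hx y hy hxy
  have hxR : x ∈ R := hA.1 hx
  have hyR : y ∈ R := hA.1 hy
  have hxx : ⟪x, x⟫_ℝ ≠ 0 := root_inner_self_ne_zero hR hxR
  have hyy : ⟪y, y⟫_ℝ ≠ 0 := root_inner_self_ne_zero hR hyR
  by_cases hyneg : y = -x
  · -- antipodal case: ruled out by ##
    exfalso
    have hd : Disjoint ({x} : Finset V) {y} := Finset.disjoint_singleton.mpr hxy
    have hxA : ({x} : Finset V) ⊆ A := Finset.singleton_subset_iff.mpr hx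
    have hyA : ({y} : Finset V) ⊆ A := Finset.singleton_subset_iff.mpr hy
    have hsxx : SRefl {x} x = -x := by rw [SRefl_singleton, sRefl_self hxx]
    have hsxnx : SRefl {x} (-x) = x := by
      rw [SRefl_singleton, sRefl]
      have c : 2 * ⟪-x, x⟫_ℝ / ⟪x, x⟫_ℝ = -2 := by
        rw [inner_neg_left]; field_simp
      rw [c]
      module
    have hsyx : SRefl {y} x = -x := by
      rw [SRefl_singleton, hyneg, sRefl]
      have c : 2 * ⟪x, -x⟫_ℝ / ⟪-x, -x⟫_ℝ = -2 := by
        rw [inner_neg_right, inner_neg_left, inner_neg_right, neg_neg]; field_simp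
      rw [c]
      module
    have hsynx : SRefl {y} (-x) = x := by
      rw [SRefl_singleton, hyneg, sRefl]
      have c : 2 * ⟪-x, -x⟫_ℝ / ⟪-x, -x⟫_ℝ = 2 := by
        rw [inner_neg_left, inner_neg_right, neg_neg]; field_simp
      rw [c]
      module
    rcases hP.mem_or_neg_mem x hxR with hxP | hnxP
    · have := hsharp2 {x} hxA {y} hyA hd x hxP (by rw [hsxx, neg_neg]; exact hxP)
      rw [hsyx] at this
      exact hP.not_both x hxP this.1
    · have := hsharp2 {x} hxA {y} hyA hd (-x) hnxP (by rw [hsxnx]; exact hnxP)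
      rw [hsynx] at this
      exact hP.not_both x this.1 hnxP
  · -- non-antipodal: use integrality and Cauchy–Schwarz
    have hso : StronglyOrthogonal R x y := hA.2 hx hy hxy
    have hsum : x + y ∉ R := hso.1
    have hdiff : x - y ∉ R := hso.2
    by_contra ha0
    obtain ⟨m, hm⟩ := hR.integral y hyR x hxR
    obtain ⟨n, hn⟩ := hR.integral x hxR y hyR
    have hm0 : m ≠ 0 := by
      intro h
      rw [h, Int.cast_zero] at hm
      rcases div_eq_zero_iff.mp hm with h1 | h1
      · exact ha0 (by linarith)
      · exact hyy h1
    have hn0 : n ≠ 0 := by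
      intro h
      rw [h, Int.cast_zero] at hn
      rcases div_eq_zero_iff.mp hn with h1 | h1
      · exact ha0 (by rw [real_inner_comm]; linarith)
      · exact hxx h1
    have hsxy : sRefl y x = x - (m : ℝ) • y := by rw [sRefl, hm]
    have hsyx : sRefl x y = y - (n : ℝ) • x := by rw [sRefl, hn]
    have hmne1 : m ≠ 1 := by
      intro h
      apply hdiff
      have h2 := hR.refl_mem y hyR x hxR
      rwa [hsxy, h, Int.cast_one, one_smul] at h2
    have hmnen1 : m ≠ -1 := by
      intro h
      apply hsum
      have h2 := hR.refl_mem y hyR x hxR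
      rw [hsxy, h, show ((((-1 : ℤ) : ℝ)) • y) = -y by push_cast; module,
        sub_neg_eq_add] at h2
      exact h2
    have hnne1 : n ≠ 1 := by
      intro h
      apply hdiff
      have h2 := hR.refl_mem x hxR y hyR
      rw [hsyx, h, Int.cast_one, one_smul] at h2
      have h3 := neg_mem_root hR h2
      rwa [neg_sub] at h3
    have hnnen1 : n ≠ -1 := by
      intro h
      apply hsum
      have h2 := hR.refl_mem x hxR y hyR
      rw [hsyx, h, show ((((-1 : ℤ) : ℝ)) • x) = -x by push_cast; module,
        sub_neg_eq_add, add_comm] at h2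
      exact h2
    have hm2 : 2 ≤ m.natAbs := by omega
    have hn2 : 2 ≤ n.natAbs := by omega
    set a := ⟪x, y⟫_ℝ with hadef
    have hyx : ⟪y, x⟫_ℝ = a := by rw [hadef]; exact real_inner_comm x y
    set p := ⟪x, x⟫_ℝ with hpdef
    set q := ⟪y, y⟫_ℝ with hqdef
    have hp0 : 0 < p := lt_of_le_of_ne real_inner_self_nonneg (Ne.symm hxx)
    have hq0 : 0 < q := lt_of_le_of_ne real_inner_self_nonneg (Ne.symm hyy)
    have ha0' : a ≠ 0 := ha0
    have hmnR : ((m * n : ℤ) : ℝ) = 4 * (a * a) / (q * p) := by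
      push_cast
      rw [← hm, ← hn, hyx]
      field_simp
      ring
    have hCS : a * a ≤ p * q := real_inner_mul_inner_self_le x y
    have hmnposZ : 0 < m * n := by
      have h2 : (0 : ℝ) < ((m * n : ℤ) : ℝ) := by
        rw [hmnR]
        have := mul_self_pos.mpr ha0'
        positivity
      exact_mod_cast h2
    have hmnleZ : m * n ≤ 4 := by
      have h2 : ((m * n : ℤ) : ℝ) ≤ 4 := by
        rw [hmnR, div_le_iff₀ (by positivity)]
        nlinarith
      exact_mod_cast h2
    have hmnge : 4 ≤ (m * n).natAbs := by
      rw [Int.natAbs_mul]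
      calc 4 = 2 * 2 := rfl
        _ ≤ m.natAbs * n.natAbs := Nat.mul_le_mul hm2 hn2
    have hmn4 : m * n = 4 := by omega
    have heq : a * a = p * q := by
      have h2 : 4 * (a * a) / (q * p) = 4 := by
        rw [← hmnR, hmn4]
        norm_num
      field_simp at h2
      linarith
    have hw : ⟪q • x - a • y, q • x - a • y⟫_ℝ = q * (p * q - a * a) := by
      rw [inner_sub_left, inner_sub_right, inner_sub_right, real_inner_smul_left,
        real_inner_smul_left, real_inner_smul_left, real_inner_smul_left,
        real_inner_smul_right, real_inner_smul_right, real_inner_smul_right,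
        real_inner_smul_right, ← hadef, ← hpdef, ← hqdef, hyx]
      ring
    have hw0 : q • x - a • y = 0 := by
      rw [← inner_self_eq_zero (𝕜 := ℝ), hw, heq]
      ring
    have hyeq : y = (q / a) • x := by
      have h1 : a • y = q • x := (sub_eq_zero.mp hw0).symm
      have h2 : (q / a) • x = a⁻¹ • (q • x) := by
        rw [smul_smul, div_eq_inv_mul]
      rw [h2, ← h1, smul_smul, inv_mul_cancel₀ ha0', one_smul]
    rcases hR.reduced x hxR (q / a) (hyeq ▸ hyR) with h | h
    · refine hxy ?_
      rw [hyeq, h, one_smul]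
    · refine hyneg ?_
      rw [hyeq, h, neg_smul, one_smul]

end Aux

/-- Under property `##`, for disjoint `A', A'' ⊆ A` the sets `R⁺_{A'}` and `R⁺_{A''}`
are disjoint and `R⁺_{A'∪A''} = R⁺_{A'} ∪ R⁺_{A''}`. -/
theorem statement6 [DecidableEq V] (R P : Set V) (A : Finset V) (hR : IsRootSystem R)
    (hP : IsPositiveSystem R P) (hA : IsSOS R ↑A) (hsharp2 : PropSharpSharp P A)
    (A' A'' : Finset V) (hA' : A' ⊆ A) (hA'' : A'' ⊆ A) (hdisj : Disjoint A' A'') :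
    Disjoint (RPlus P A') (RPlus P A'') ∧
      RPlus P (A' ∪ A'') = RPlus P A' ∪ RPlus P A'' := by
  classical
  have horthA : ∀ x ∈ A, ∀ y ∈ A, x ≠ y → ⟪x, y⟫_ℝ = 0 := orth_of_SOS hR hP hA hsharp2
  have hsub : ∀ {B : Finset V}, B ⊆ A → ↑B ⊆ R := fun {B} hB x hx => hA.1 (hB hx)
  have horthB : ∀ {B : Finset V}, B ⊆ A → ∀ α ∈ B, ∀ γ ∈ B, γ ≠ α → ⟪γ, α⟫_ℝ = 0 :=
    fun {B} hB α hα γ hγ hne => horthA γ (hB hγ) α (hB hα) hne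
  have horth12 : ∀ α ∈ A', ∀ γ ∈ A'', ⟪γ, α⟫_ℝ = 0 := by
    intro α hα γ hγ
    refine horthA γ (hA'' hγ) α (hA' hα) ?_
    intro h
    subst h
    exact absurd hα (Finset.disjoint_right.mp hdisj hγ)
  have horth21 : ∀ α ∈ A'', ∀ γ ∈ A', ⟪γ, α⟫_ℝ = 0 := by
    intro α hα γ hγ
    refine horthA γ (hA' hγ) α (hA'' hα) ?_
    intro h
    subst h
    exact absurd hα (Finset.disjoint_left.mp hdisj hγ)
  have hU : ∀ v, SRefl (A' ∪ A'') v = SRefl A' (SRefl A'' v) := SRefl_union hdisj horth12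
  have hU2 : ∀ v, SRefl (A' ∪ A'') v = SRefl A'' (SRefl A' v) := fun v => by
    rw [Finset.union_comm]
    exact SRefl_union hdisj.symm horth21 v
  refine ⟨?_, ?_⟩
  · rw [Set.disjoint_left]
    intro β h1 h2
    obtain ⟨hs1, _⟩ := hsharp2 A' hA' A'' hA'' hdisj β h1.1 h1.2
    exact hP.not_both _ hs1 h2.2
  · ext β
    constructor
    · rintro ⟨hβ, hneg⟩
      by_cases h2 : -(SRefl A'' β) ∈ P
      · exact Or.inr ⟨hβ, h2⟩
      · left
        have hβR : β ∈ R := hP.subset hβ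
        have hγR : SRefl A'' β ∈ R := SRefl_mem hR A'' (hsub hA'') (horthB hA'') hβR
        have hγP : SRefl A'' β ∈ P := (hP.mem_or_neg_mem _ hγR).resolve_right h2
        rw [hU] at hneg
        obtain ⟨_, h4⟩ := hsharp2 A' hA' A'' hA'' hdisj (SRefl A'' β) hγP hneg
        rw [SRefl_SRefl (fun α hα => root_inner_self_ne_zero hR (hA.1 (hA'' hα)))
          (horthB hA'') β] at h4
        exact ⟨hβ, h4⟩
    · rintro (⟨hβ, hneg⟩ | ⟨hβ, hneg⟩)
      · obtain ⟨h1, h2⟩ := hsharp2 A' hA' A'' hA'' hdisj β hβ hneg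
        refine ⟨hβ, ?_⟩
        rw [hU]
        exact h2
      · obtain ⟨h1, h2⟩ := hsharp2 A'' hA'' A' hA' hdisj.symm β hβ hneg
        refine ⟨hβ, ?_⟩
        rw [hU2]
        exact h2
end

section
/- Let R be an irreducible reduced root system in which all roots have the same length, normalized to 1 (simply-laced, short roots of length 1 under a Weyl-invariant inner product making short roots of length 1). If α, β ∈ R are orthogonal, then (α∨+β∨)/2 is not in the coroot lattice Q∨. -/
open scoped InnerProductSpace

variable {V : Type*} [NormedAddCommGroup V] [InnerProductSpace ℝ V]

/-- The root system `R` is irreducible: it is nonempty and admits no partition into two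
nonempty mutually orthogonal subsets. -/
def IsIrreducibleRS (R : Set V) : Prop :=
  R.Nonempty ∧ ¬∃ S₁ S₂ : Set V, S₁.Nonempty ∧ S₂.Nonempty ∧ S₁ ∪ S₂ = R ∧
    ∀ s ∈ S₁, ∀ t ∈ S₂, ⟪s, t⟫_ℝ = 0

-- aux lemmas
lemma inner_self_one {R : Set V} (hlen : ∀ α ∈ R, ‖α‖ = 1) {γ : V} (hγ : γ ∈ R) :
    ⟪γ, γ⟫_ℝ = 1 := by
  rw [real_inner_self_eq_norm_sq, hlen γ hγ]; norm_num

lemma coroot_eq {R : Set V} (hlen : ∀ α ∈ R, ‖α‖ = 1) {γ : V} (hγ : γ ∈ R) :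
    coroot γ = (2 : ℝ) • γ := by
  rw [coroot, inner_self_one hlen hγ, div_one]

lemma inner_roots_int (R : Set V) (hR : IsRootSystem R) (hlen : ∀ α ∈ R, ‖α‖ = 1)
    {γ δ : V} (hγ : γ ∈ R) (hδ : δ ∈ R) : ∃ n : ℤ, 2 * ⟪γ, δ⟫_ℝ = (n : ℝ) := by
  obtain ⟨n, hn⟩ := hR.integral δ hδ γ hγ
  exact ⟨n, by rwa [inner_self_one hlen hδ, div_one] at hn⟩

lemma pair_even (R : Set V) (hR : IsRootSystem R) (hlen : ∀ α ∈ R, ‖α‖ = 1)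
    {v w : V} (hv : v ∈ AddSubgroup.closure (coroot '' R))
    (hw : w ∈ AddSubgroup.closure (coroot '' R)) :
    ∃ n : ℤ, ⟪v, w⟫_ℝ = 2 * n := by
  induction hv using AddSubgroup.closure_induction with
  | mem x hx =>
    obtain ⟨γ, hγ, rfl⟩ := hx
    rw [coroot_eq hlen hγ]
    induction hw using AddSubgroup.closure_induction with
    | mem y hy =>
      obtain ⟨δ, hδ, rfl⟩ := hy
      obtain ⟨n, hn⟩ := inner_roots_int R hR hlen hγ hδ
      refine ⟨n, ?_⟩
      rw [coroot_eq hlen hδ, real_inner_smul_left, real_inner_smul_right]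
      linarith
    | zero => exact ⟨0, by simp⟩
    | add y z _ _ hy hz =>
      obtain ⟨m, hm⟩ := hy; obtain ⟨n, hn⟩ := hz
      exact ⟨m + n, by rw [inner_add_right, hm, hn]; push_cast; ring⟩
    | neg y _ hy =>
      obtain ⟨m, hm⟩ := hy
      exact ⟨-m, by rw [inner_neg_right, hm]; push_cast; ring⟩
  | zero => exact ⟨0, by simp⟩
  | add y z _ _ hy hz =>
    obtain ⟨m, hm⟩ := hy; obtain ⟨n, hn⟩ := hz
    exact ⟨m + n, by rw [inner_add_left, hm, hn]; push_cast; ring⟩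
  | neg y _ hy =>
    obtain ⟨m, hm⟩ := hy
    exact ⟨-m, by rw [inner_neg_left, hm]; push_cast; ring⟩

lemma self_div4 (R : Set V) (hR : IsRootSystem R) (hlen : ∀ α ∈ R, ‖α‖ = 1)
    {v : V} (hv : v ∈ AddSubgroup.closure (coroot '' R)) :
    ∃ n : ℤ, ⟪v, v⟫_ℝ = 4 * n := by
  induction hv using AddSubgroup.closure_induction with
  | mem x hx =>
    obtain ⟨γ, hγ, rfl⟩ := hx
    refine ⟨1, ?_⟩
    rw [coroot_eq hlen hγ, real_inner_smul_left, real_inner_smul_right,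
      inner_self_one hlen hγ]
    norm_num
  | zero => exact ⟨0, by simp⟩
  | add y z hy' hz' hy hz =>
    obtain ⟨m, hm⟩ := hy; obtain ⟨n, hn⟩ := hz
    obtain ⟨k, hk⟩ := pair_even R hR hlen hy' hz'
    have hzy : ⟪z, y⟫_ℝ = 2 * k := by rw [real_inner_comm]; exact hk
    refine ⟨m + n + k, ?_⟩
    rw [inner_add_left, inner_add_right, inner_add_right, hm, hn, hk, hzy]
    push_cast; ring
  | neg y _ hy =>
    obtain ⟨m, hm⟩ := hy
    exact ⟨m, by rw [inner_neg_left, inner_neg_right, neg_neg, hm]⟩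

/-- In an irreducible simply-laced root system all of whose roots have length `1`,
for orthogonal roots `α, β` the vector `(α∨+β∨)/2` is not in the coroot lattice. -/
theorem statement13 (R : Set V) (hR : IsRootSystem R) (hirr : IsIrreducibleRS R)
    (hlen : ∀ α ∈ R, ‖α‖ = 1) (α β : V) (hα : α ∈ R) (hβ : β ∈ R)
    (horth : ⟪α, β⟫_ℝ = 0) :
    (1 / 2 : ℝ) • (coroot α + coroot β) ∉ AddSubgroup.closure (coroot '' R) := by
  intro hmem
  have hv : (1 / 2 : ℝ) • (coroot α + coroot β) = α + β := by
    rw [coroot_eq hlen hα, coroot_eq hlen hβ, ← smul_add, smul_smul]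
    norm_num
  rw [hv] at hmem
  obtain ⟨n, hn⟩ := self_div4 R hR hlen hmem
  have hba : ⟪β, α⟫_ℝ = 0 := by rw [real_inner_comm]; exact horth
  have : ⟪α + β, α + β⟫_ℝ = 2 := by
    rw [inner_add_left, inner_add_right, inner_add_right, inner_self_one hlen hα,
      inner_self_one hlen hβ, horth, hba]
    ring
  rw [this] at hn
  have h2 : (2 : ℤ) = 4 * n := by exact_mod_cast hn
  omega
end
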